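/- For every integer ℘ ≥ 8 with ℘ ≡ 0 (mod 4), the Toeplitz graph T_℘⟨{1, 2, ℘−1}⟩ satisfies ℘/(℘−2) ≤ ldim_f(T_℘⟨{1, 2, ℘−1}⟩) ≤ 2. -/

import Mathlib

open Finset

/-- A local resolving function of a graph `G`: a map `ζ : V → [0,1]` such that for every
pair of adjacent vertices `u v`, the sum of `ζ` over the local resolving neighborhood
`R{u,v} = {w : d(w,u) ≠ d(w,v)}` is at least `1`. -/
def IsLocalResolvingFunction {V : Type*} [Fintype V] (G : SimpleGraph V) (ζ : V → ℝ) : Prop :=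
  (∀ w, ζ w ∈ Set.Icc (0 : ℝ) 1) ∧
    ∀ u v, G.Adj u v →
      1 ≤ ∑ w ∈ Finset.univ.filter (fun w => G.dist w u ≠ G.dist w v), ζ w

/-- The local fractional metric dimension of `G`: the minimum of `∑ v, ζ v` over all
local resolving functions `ζ` of `G`. -/
noncomputable def ldimf {V : Type*} [Fintype V] (G : SimpleGraph V) : ℝ :=
  sInf {s : ℝ | ∃ ζ : V → ℝ, IsLocalResolvingFunction G ζ ∧ s = ∑ v, ζ v}

/-- The Toeplitz graph `T_n⟨S⟩` (vertices `0, …, n-1` standing for `1, …, n`):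
two distinct vertices are adjacent iff their absolute difference lies in `S`. -/
def toeplitzGraph (n : ℕ) (S : Set ℕ) : SimpleGraph (Fin n) where
  Adj p q := p ≠ q ∧ Nat.dist (p : ℕ) (q : ℕ) ∈ S
  symm := ⟨fun p q ⟨h1, h2⟩ => ⟨h1.symm, by rwa [Nat.dist_comm]⟩⟩
  loopless := ⟨fun p ⟨h, _⟩ => h rfl⟩

/-! ### Auxiliary machinery -/

/-- The distance function from a "middle" vertex `w` in `T_p⟨{1,2,p-1}⟩`. -/
def fmAux (p w j : ℕ) : ℕ := min ((j - w + (w - j) + 1) / 2) (1 + (w + 1) / 2 + (p - j) / 2)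

lemma fmAux_dir (p w j : ℕ) (h : (j - w + (w - j) + 1) / 2 ≤ 1 + (w + 1) / 2 + (p - j) / 2) :
    fmAux p w j = (j - w + (w - j) + 1) / 2 := min_eq_left h

lemma fmAux_wrap (p w j : ℕ) (h : 1 + (w + 1) / 2 + (p - j) / 2 ≤ (j - w + (w - j) + 1) / 2) :
    fmAux p w j = 1 + (w + 1) / 2 + (p - j) / 2 := min_eq_right h

lemma toep_adj_iff (p : ℕ) (u v : Fin p) :
    (toeplitzGraph p {1, 2, p - 1}).Adj u v ↔
      ((u : ℕ) ≠ v ∧ ((u:ℕ) - v + ((v:ℕ) - u) = 1 ∨ (u:ℕ) - v + ((v:ℕ) - u) = 2 ∨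
        (u:ℕ) - v + ((v:ℕ) - u) = p - 1)) := by
  have hd : Nat.dist (u:ℕ) (v:ℕ) = (u:ℕ) - v + ((v:ℕ) - u) := rfl
  show (u ≠ v ∧ Nat.dist (u:ℕ) (v:ℕ) ∈ ({1, 2, p-1} : Set ℕ)) ↔ _
  rw [hd]
  simp [Set.mem_insert_iff, Ne, Fin.ext_iff]

lemma exists_walk_le {V : Type*} (G : SimpleGraph V) (f : V → ℕ) (w : V)
    (hz : ∀ v, f v = 0 → v = w)
    (hstep : ∀ v, f v ≠ 0 → ∃ u, G.Adj u v ∧ f u < f v) :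
    ∀ (n : ℕ) (v : V), f v ≤ n → ∃ q : G.Walk w v, q.length ≤ f v := by
  intro n
  induction n with
  | zero =>
    intro v hv
    have h := hz v (Nat.le_zero.mp hv)
    subst h
    exact ⟨SimpleGraph.Walk.nil, Nat.zero_le _⟩
  | succ n ih =>
    intro v hv
    by_cases hv0 : f v = 0
    · have h := hz v hv0
      subst h
      exact ⟨SimpleGraph.Walk.nil, Nat.zero_le _⟩
    · obtain ⟨u, hadj, hlt⟩ := hstep v hv0
      obtain ⟨q, hq⟩ := ih u (by omega)
      exact ⟨q.concat hadj, by rw [SimpleGraph.Walk.length_concat]; omega⟩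

lemma f_le_walk {V : Type*} (G : SimpleGraph V) (f : V → ℕ)
    (hlip : ∀ ⦃u v⦄, G.Adj u v → f v ≤ f u + 1) :
    ∀ {u v : V} (q : G.Walk u v), f v ≤ f u + q.length := by
  intro u v q
  induction q with
  | nil => simp
  | cons h q ih =>
    rw [SimpleGraph.Walk.length_cons]
    have := hlip h
    omega

lemma dist_eq_of {V : Type*} (G : SimpleGraph V) (f : V → ℕ) (w : V) (h0 : f w = 0)
    (hz : ∀ v, f v = 0 → v = w)
    (hstep : ∀ v, f v ≠ 0 → ∃ u, G.Adj u v ∧ f u < f v)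
    (hlip : ∀ ⦃u v⦄, G.Adj u v → f v ≤ f u + 1) (v : V) : G.dist w v = f v := by
  obtain ⟨q, hq⟩ := exists_walk_le G f w hz hstep (f v) v le_rfl
  have h1 : G.dist w v ≤ f v := (SimpleGraph.dist_le q).trans hq
  obtain ⟨q0, hq0⟩ := (q.reachable).exists_walk_length_eq_dist
  have h2 := f_le_walk G f hlip q0
  rw [h0, hq0] at h2
  omega

lemma dist_mid (p : ℕ) (hp : 8 ≤ p) (hmod : p % 4 = 0) (w : ℕ) (hwlt : w < p)
    (hw1 : p / 2 - 3 ≤ w) (hw2 : w ≤ p / 2) (v : Fin p) :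
    (toeplitzGraph p {1, 2, p - 1}).dist ⟨w, hwlt⟩ v = fmAux p w (v : ℕ) := by
  apply dist_eq_of (f := fun v : Fin p => fmAux p w (v : ℕ))
  · show fmAux p w w = 0
    simp only [fmAux]; omega
  · rintro ⟨j, hj⟩ hxz
    simp only [fmAux] at hxz
    have : j = w := by omega
    subst this
    rfl
  · rintro ⟨j, hj⟩ hxz
    simp only [fmAux] at hxz ⊢
    by_cases hc1 : j < w
    · by_cases hc2 : j + 1 = w
      · refine ⟨⟨w, by omega⟩, (toep_adj_iff p _ _).mpr ?_, ?_⟩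
        · simp only [Fin.val_mk]; omega
        · simp only [fmAux, Fin.val_mk]; omega
      · refine ⟨⟨j + 2, by omega⟩, (toep_adj_iff p _ _).mpr ?_, ?_⟩
        · simp only [Fin.val_mk]; omega
        · simp only [fmAux, Fin.val_mk]; omega
    · by_cases hreg : (j - w + (w - j) + 1) / 2 ≤ 1 + (w + 1) / 2 + (p - j) / 2
      · by_cases hc2 : j = w + 1
        · refine ⟨⟨w, by omega⟩, (toep_adj_iff p _ _).mpr ?_, ?_⟩
          · simp only [Fin.val_mk]; omega
          · simp only [fmAux, Fin.val_mk]; omega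
        · refine ⟨⟨j - 2, by omega⟩, (toep_adj_iff p _ _).mpr ?_, ?_⟩
          · simp only [Fin.val_mk]; omega
          · simp only [fmAux, Fin.val_mk]; omega
      · by_cases hc2 : j = p - 1
        · refine ⟨⟨0, by omega⟩, (toep_adj_iff p _ _).mpr ?_, ?_⟩
          · simp only [Fin.val_mk]; omega
          · simp only [fmAux, Fin.val_mk]; omega
        · by_cases hc3 : j = p - 2
          · refine ⟨⟨p - 1, by omega⟩, (toep_adj_iff p _ _).mpr ?_, ?_⟩
            · simp only [Fin.val_mk]; omega
            · simp only [fmAux, Fin.val_mk]; omega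
          · refine ⟨⟨j + 2, by omega⟩, (toep_adj_iff p _ _).mpr ?_, ?_⟩
            · simp only [Fin.val_mk]; omega
            · simp only [fmAux, Fin.val_mk]; omega
  · rintro ⟨a, ha⟩ ⟨b, hb⟩ hadj
    rw [toep_adj_iff] at hadj
    simp only [Fin.val_mk] at hadj ⊢
    simp only [fmAux]
    omega

set_option maxHeartbeats 1000000 in
lemma key_select (p u v : ℕ) (hp : 8 ≤ p) (hmod : p % 4 = 0) (hu : u < p) (hv : v < p)
    (hd : v = u + 1 ∨ v = u + 2 ∨ (u = 0 ∧ v = p - 1)) :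
    ∃ s t : ℕ, s < 4 ∧ t < 4 ∧ s ≠ t ∧
      fmAux p (p / 2 - 3 + s) u ≠ fmAux p (p / 2 - 3 + s) v ∧
      fmAux p (p / 2 - 3 + t) u ≠ fmAux p (p / 2 - 3 + t) v := by
  rcases hd with rfl | rfl | ⟨rfl, rfl⟩
  · -- v = u + 1
    by_cases h1 : u ≤ p / 2 - 3
    · rcases Nat.even_or_odd u with ⟨m, rfl⟩ | ⟨m, rfl⟩
      · exact ⟨0, 2, by norm_num, by norm_num, by norm_num,
          by rw [fmAux_dir _ _ _ (by omega), fmAux_dir _ _ _ (by omega)]; omega,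
          by rw [fmAux_dir _ _ _ (by omega), fmAux_dir _ _ _ (by omega)]; omega⟩
      · exact ⟨1, 3, by norm_num, by norm_num, by norm_num,
          by rw [fmAux_dir _ _ _ (by omega), fmAux_dir _ _ _ (by omega)]; omega,
          by rw [fmAux_dir _ _ _ (by omega), fmAux_dir _ _ _ (by omega)]; omega⟩
    · by_cases h2 : u = p / 2 - 2
      · exact ⟨1, 2, by norm_num, by norm_num, by norm_num,
          by rw [fmAux_dir _ _ _ (by omega), fmAux_dir _ _ _ (by omega)]; omega,
          by rw [fmAux_dir _ _ _ (by omega), fmAux_dir _ _ _ (by omega)]; omega⟩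
      · by_cases h3 : u = p / 2 - 1
        · exact ⟨2, 3, by norm_num, by norm_num, by norm_num,
            by rw [fmAux_dir _ _ _ (by omega), fmAux_dir _ _ _ (by omega)]; omega,
            by rw [fmAux_dir _ _ _ (by omega), fmAux_dir _ _ _ (by omega)]; omega⟩
        · by_cases h4 : u = p - 2
          · exact ⟨0, 3, by norm_num, by norm_num, by norm_num,
              by rw [fmAux_dir _ _ _ (by omega), fmAux_wrap _ _ _ (by omega)]; omega,
              by rw [fmAux_dir _ _ _ (by omega), fmAux_dir _ _ _ (by omega)]; omega⟩
          · rcases Nat.even_or_odd u with ⟨m, rfl⟩ | ⟨m, rfl⟩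
            · exact ⟨1, 3, by norm_num, by norm_num, by norm_num,
                by rw [fmAux_dir _ _ _ (by omega), fmAux_dir _ _ _ (by omega)]; omega,
                by rw [fmAux_dir _ _ _ (by omega), fmAux_dir _ _ _ (by omega)]; omega⟩
            · exact ⟨0, 2, by norm_num, by norm_num, by norm_num,
                by rw [fmAux_dir _ _ _ (by omega), fmAux_dir _ _ _ (by omega)]; omega,
                by rw [fmAux_dir _ _ _ (by omega), fmAux_dir _ _ _ (by omega)]; omega⟩
  · -- v = u + 2
    by_cases h1 : u = p / 2 - 4
    · exact ⟨1, 2, by norm_num, by norm_num, by norm_num,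
        by rw [fmAux_dir _ _ _ (by omega), fmAux_dir _ _ _ (by omega)]; omega,
        by rw [fmAux_dir _ _ _ (by omega), fmAux_dir _ _ _ (by omega)]; omega⟩
    · by_cases h2 : u = p / 2 - 1
      · exact ⟨0, 1, by norm_num, by norm_num, by norm_num,
          by rw [fmAux_dir _ _ _ (by omega), fmAux_dir _ _ _ (by omega)]; omega,
          by rw [fmAux_dir _ _ _ (by omega), fmAux_dir _ _ _ (by omega)]; omega⟩
      · by_cases h3 : u = p - 3
        · exact ⟨2, 3, by norm_num, by norm_num, by norm_num,
            by rw [fmAux_dir _ _ _ (by omega), fmAux_dir _ _ _ (by omega)]; omega,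
            by rw [fmAux_dir _ _ _ (by omega), fmAux_dir _ _ _ (by omega)]; omega⟩
        · exact ⟨0, 3, by norm_num, by norm_num, by norm_num,
            by rw [fmAux_dir _ _ _ (by omega), fmAux_dir _ _ _ (by omega)]; omega,
            by rw [fmAux_dir _ _ _ (by omega), fmAux_dir _ _ _ (by omega)]; omega⟩
  · -- seam edge (0, p-1)
    exact ⟨0, 1, by norm_num, by norm_num, by norm_num,
      by rw [fmAux_dir _ _ _ (by omega), fmAux_wrap _ _ _ (by omega)]; omega,
      by rw [fmAux_dir _ _ _ (by omega), fmAux_wrap _ _ _ (by omega)]; omega⟩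

lemma fin_add_one (p n : ℕ) [NeZero p] (hp : 2 ≤ p) (h : n < p) (h2 : n + 1 < p) :
    (⟨n, h⟩ : Fin p) + 1 = ⟨n + 1, h2⟩ := by
  apply Fin.ext
  rw [Fin.add_def]
  simp only [Fin.val_mk, Fin.val_one']
  rw [Nat.mod_eq_of_lt (by omega : 1 < p), Nat.mod_eq_of_lt h2]

lemma fin_add_one_top (p : ℕ) [NeZero p] (hp : 2 ≤ p) (h : p - 1 < p) :
    (⟨p - 1, h⟩ : Fin p) + 1 = ⟨0, by omega⟩ := by
  apply Fin.ext
  rw [Fin.add_def]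
  simp only [Fin.val_mk, Fin.val_one']
  rw [Nat.mod_eq_of_lt (by omega : 1 < p)]
  have : p - 1 + 1 = p := by omega
  rw [this, Nat.mod_self]

lemma dist_two_of {V : Type*} (G : SimpleGraph V) (u v x : V) (hne : u ≠ v)
    (hnadj : ¬ G.Adj u v) (h1 : G.Adj u x) (h2 : G.Adj x v) : G.dist u v = 2 := by
  have hq : G.dist u v ≤ 2 := by
    have := SimpleGraph.dist_le
      (SimpleGraph.Walk.cons h1 (SimpleGraph.Walk.cons h2 SimpleGraph.Walk.nil))
    simpa using this
  have h0 : 0 < G.dist u v :=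
    ((SimpleGraph.Walk.cons h1 (SimpleGraph.Walk.cons h2
      SimpleGraph.Walk.nil)).reachable).pos_dist_of_ne hne
  have hne1 : G.dist u v ≠ 1 := fun h => hnadj (SimpleGraph.dist_eq_one_iff_adj.mp h)
  omega

/-- Every vertex fails to resolve at least two cycle edges. -/
lemma ties (p : ℕ) [NeZero p] (hp : 8 ≤ p) (w : Fin p) :
    ∃ i1 i2 : Fin p, i1 ≠ i2 ∧
      (toeplitzGraph p {1,2,p-1}).dist w i1 = (toeplitzGraph p {1,2,p-1}).dist w (i1+1) ∧
      (toeplitzGraph p {1,2,p-1}).dist w i2 = (toeplitzGraph p {1,2,p-1}).dist w (i2+1) := by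
  set G := toeplitzGraph p {1,2,p-1} with hG
  have d1 : ∀ (a b : ℕ) (ha : a < p) (hb : b < p), a ≠ b →
      (a - b + (b - a) = 1 ∨ a - b + (b - a) = 2 ∨ a - b + (b - a) = p - 1) →
      G.dist ⟨a, ha⟩ ⟨b, hb⟩ = 1 := by
    intro a b ha hb hne h
    exact SimpleGraph.dist_eq_one_iff_adj.mpr ((toep_adj_iff p _ _).mpr ⟨hne, h⟩)
  have d2 : ∀ (a b x : ℕ) (ha : a < p) (hb : b < p) (hx : x < p), a ≠ b → a ≠ x → x ≠ b →
      ¬(a - b + (b - a) = 1 ∨ a - b + (b - a) = 2 ∨ a - b + (b - a) = p - 1) →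
      (a - x + (x - a) = 1 ∨ a - x + (x - a) = 2 ∨ a - x + (x - a) = p - 1) →
      (x - b + (b - x) = 1 ∨ x - b + (b - x) = 2 ∨ x - b + (b - x) = p - 1) →
      G.dist ⟨a, ha⟩ ⟨b, hb⟩ = 2 := by
    intro a b x ha hb hx hab hax hxb hnadj h1 h2
    refine dist_two_of G _ _ (⟨x, hx⟩ : Fin p) ?_ ?_ ?_ ?_
    · simp only [Ne, Fin.ext_iff]; exact hab
    · intro hA
      rw [toep_adj_iff] at hA
      exact hnadj hA.2
    · exact (toep_adj_iff p _ _).mpr ⟨hax, h1⟩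
    · exact (toep_adj_iff p _ _).mpr ⟨hxb, h2⟩
  rcases w with ⟨n, hn⟩
  by_cases hn0 : n = 0
  · subst hn0
    refine ⟨⟨1, by omega⟩, ⟨3, by omega⟩, by simp [Fin.ext_iff], ?_, ?_⟩
    · rw [fin_add_one p 1 (by omega) (by omega) (by omega)]
      rw [d1 0 1 _ _ (by omega) (by omega), d1 0 2 _ _ (by omega) (by omega)]
    · rw [fin_add_one p 3 (by omega) (by omega) (by omega)]
      rw [d2 0 3 2 _ _ (by omega) (by omega) (by omega) (by omega) (by omega) (by omega)
        (by omega), d2 0 4 2 _ _ (by omega) (by omega) (by omega) (by omega) (by omega)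
        (by omega) (by omega)]
  · by_cases hn1 : n = 1
    · subst hn1
      refine ⟨⟨2, by omega⟩, ⟨4, by omega⟩, by simp [Fin.ext_iff], ?_, ?_⟩
      · rw [fin_add_one p 2 (by omega) (by omega) (by omega)]
        rw [d1 1 2 _ _ (by omega) (by omega), d1 1 3 _ _ (by omega) (by omega)]
      · rw [fin_add_one p 4 (by omega) (by omega) (by omega)]
        rw [d2 1 4 2 _ _ (by omega) (by omega) (by omega) (by omega) (by omega) (by omega)
          (by omega), d2 1 5 3 _ _ (by omega) (by omega) (by omega) (by omega) (by omega)
          (by omega) (by omega)]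
    · by_cases hn2 : n = p - 1
      · subst hn2
        refine ⟨⟨p - 3, by omega⟩, ⟨p - 5, by omega⟩, by simp [Fin.ext_iff]; omega, ?_, ?_⟩
        · rw [fin_add_one p (p - 3) (by omega) (by omega) (by omega)]
          rw [d1 (p-1) (p-3) _ _ (by omega) (by omega),
            d1 (p-1) (p-3+1) _ _ (by omega) (by omega)]
        · rw [fin_add_one p (p - 5) (by omega) (by omega) (by omega)]
          rw [d2 (p-1) (p-5) (p-3) _ _ (by omega) (by omega) (by omega) (by omega) (by omega)
            (by omega) (by omega),
            d2 (p-1) (p-5+1) (p-3) _ _ (by omega) (by omega) (by omega) (by omega)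
            (by omega) (by omega) (by omega)]
      · by_cases hn3 : n = p - 2
        · subst hn3
          refine ⟨⟨p - 4, by omega⟩, ⟨p - 6, by omega⟩, by simp [Fin.ext_iff]; omega, ?_, ?_⟩
          · rw [fin_add_one p (p - 4) (by omega) (by omega) (by omega)]
            rw [d1 (p-2) (p-4) _ _ (by omega) (by omega),
              d1 (p-2) (p-4+1) _ _ (by omega) (by omega)]
          · rw [fin_add_one p (p - 6) (by omega) (by omega) (by omega)]
            rw [d2 (p-2) (p-6) (p-4) _ _ (by omega) (by omega) (by omega) (by omega) (by omega)
              (by omega) (by omega),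
              d2 (p-2) (p-6+1) (p-4) _ _ (by omega) (by omega) (by omega) (by omega)
              (by omega) (by omega) (by omega)]
        · -- generic case 2 ≤ n ≤ p - 3
          refine ⟨⟨n + 1, by omega⟩, ⟨n - 2, by omega⟩, by simp [Fin.ext_iff]; omega, ?_, ?_⟩
          · rw [fin_add_one p (n + 1) (by omega) (by omega) (by omega)]
            rw [d1 n (n+1) _ _ (by omega) (by omega), d1 n (n+2) _ _ (by omega) (by omega)]
          · rw [fin_add_one p (n - 2) (by omega) (by omega) (by omega)]
            rw [d1 n (n-2) _ _ (by omega) (by omega),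
              d1 n (n-2+1) _ _ (by omega) (by omega)]

/-- For every integer `℘ ≥ 8` with `℘ ≡ 0 (mod 4)`,
`℘/(℘-2) ≤ ldimf(T_℘⟨{1, 2, ℘-1}⟩) ≤ 2`. -/
theorem ldimf_toeplitz_mod_four_zero (p : ℕ) (hp : 8 ≤ p) (hmod : p % 4 = 0) :
    (p : ℝ) / ((p : ℝ) - 2) ≤ ldimf (toeplitzGraph p {1, 2, p - 1}) ∧
      ldimf (toeplitzGraph p {1, 2, p - 1}) ≤ 2 := by
  haveI : NeZero p := ⟨by omega⟩
  set G := toeplitzGraph p {1, 2, p - 1} with hG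
  set ζ : Fin p → ℝ := fun x => if p / 2 - 3 ≤ (x:ℕ) ∧ (x:ℕ) ≤ p / 2 then (1/2 : ℝ) else 0
    with hζdef
  -- sum of ζ is 2
  have hfilter4 : univ.filter (fun x : Fin p => p / 2 - 3 ≤ (x:ℕ) ∧ (x:ℕ) ≤ p / 2) =
      {(⟨p/2-3, by omega⟩ : Fin p), ⟨p/2-2, by omega⟩, ⟨p/2-1, by omega⟩, ⟨p/2, by omega⟩} := by
    ext ⟨j, hj⟩
    simp only [Finset.mem_filter, Finset.mem_univ, true_and, Finset.mem_insert,
      Finset.mem_singleton, Fin.ext_iff, Fin.val_mk]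
    omega
  have hsum2 : ∑ v, ζ v = 2 := by
    rw [hζdef]
    rw [← Finset.sum_filter, hfilter4]
    rw [Finset.sum_insert (by simp [Fin.ext_iff]; omega),
      Finset.sum_insert (by simp [Fin.ext_iff]; omega),
      Finset.sum_insert (by simp [Fin.ext_iff]; omega), Finset.sum_singleton]
    norm_num
  -- ζ is a local resolving function
  have hζ01 : ∀ w, ζ w ∈ Set.Icc (0:ℝ) 1 := by
    intro w
    rw [hζdef]
    simp only [Set.mem_Icc]
    split_ifs <;> norm_num
  have claim : ∀ u v : Fin p, (u:ℕ) < (v:ℕ) → G.Adj u v →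
      1 ≤ ∑ w ∈ Finset.univ.filter (fun w => G.dist w u ≠ G.dist w v), ζ w := by
    intro u v hlt hadj
    rw [hG, toep_adj_iff] at hadj
    have hvp := v.isLt
    have hup := u.isLt
    have hd : (v:ℕ) = (u:ℕ) + 1 ∨ (v:ℕ) = (u:ℕ) + 2 ∨ ((u:ℕ) = 0 ∧ (v:ℕ) = p - 1) := by
      omega
    obtain ⟨s, t, hs4, ht4, hst, hfs, hft⟩ :=
      key_select p (u:ℕ) (v:ℕ) hp hmod u.isLt v.isLt hd
    have hW1lt : p / 2 - 3 + s < p := by omega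
    have hW2lt : p / 2 - 3 + t < p := by omega
    have hW1mem : (⟨p / 2 - 3 + s, hW1lt⟩ : Fin p) ∈ Finset.univ.filter (fun w => G.dist w u ≠ G.dist w v) := by
      rw [Finset.mem_filter]
      refine ⟨Finset.mem_univ _, ?_⟩
      rw [hG, dist_mid p hp hmod _ hW1lt (by omega) (by omega) u,
        dist_mid p hp hmod _ hW1lt (by omega) (by omega) v]
      exact hfs
    have hW2mem : (⟨p / 2 - 3 + t, hW2lt⟩ : Fin p) ∈ Finset.univ.filter (fun w => G.dist w u ≠ G.dist w v) := by
      rw [Finset.mem_filter]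
      refine ⟨Finset.mem_univ _, ?_⟩
      rw [hG, dist_mid p hp hmod _ hW2lt (by omega) (by omega) u,
        dist_mid p hp hmod _ hW2lt (by omega) (by omega) v]
      exact hft
    have hW12 : (⟨p / 2 - 3 + s, hW1lt⟩ : Fin p) ≠ ⟨p / 2 - 3 + t, hW2lt⟩ := by
      simp only [Ne, Fin.ext_iff, Fin.val_mk]
      omega
    have hsub : ({⟨p / 2 - 3 + s, hW1lt⟩, ⟨p / 2 - 3 + t, hW2lt⟩} : Finset (Fin p)) ⊆
        Finset.univ.filter (fun w => G.dist w u ≠ G.dist w v) := by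
      intro x hx
      rcases Finset.mem_insert.mp hx with rfl | hx
      · exact hW1mem
      · rw [Finset.mem_singleton] at hx
        subst hx
        exact hW2mem
    have hζW1 : ζ ⟨p / 2 - 3 + s, hW1lt⟩ = 1/2 := by
      rw [hζdef]
      exact if_pos ⟨by simp only [Fin.val_mk]; omega, by simp only [Fin.val_mk]; omega⟩
    have hζW2 : ζ ⟨p / 2 - 3 + t, hW2lt⟩ = 1/2 := by
      rw [hζdef]
      exact if_pos ⟨by simp only [Fin.val_mk]; omega, by simp only [Fin.val_mk]; omega⟩
    have hle := Finset.sum_le_sum_of_subset_of_nonneg hsub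
      (fun x _ _ => (hζ01 x).1)
    rw [Finset.sum_pair hW12, hζW1, hζW2] at hle
    linarith
  have hsymmfilter : ∀ u v : Fin p,
      Finset.univ.filter (fun w => G.dist w u ≠ G.dist w v) =
      Finset.univ.filter (fun w => G.dist w v ≠ G.dist w u) := by
    intro u v
    apply Finset.filter_congr
    intro w _
    simp [ne_comm]
  have hLRF : IsLocalResolvingFunction G ζ := by
    refine ⟨hζ01, ?_⟩
    intro u v hadj
    rcases lt_trichotomy (u:ℕ) (v:ℕ) with h | h | h
    · exact claim u v h hadj
    · exact absurd (Fin.ext h) hadj.ne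
    · rw [hsymmfilter u v]
      exact claim v u h hadj.symm
  set Sset := {s : ℝ | ∃ ξ : Fin p → ℝ, IsLocalResolvingFunction G ξ ∧ s = ∑ v, ξ v}
    with hSset
  have hmem2 : (2:ℝ) ∈ Sset := ⟨ζ, hLRF, hsum2.symm⟩
  have hbdd : BddBelow Sset := by
    refine ⟨0, ?_⟩
    rintro s ⟨ξ, hξ, rfl⟩
    exact Finset.sum_nonneg (fun i _ => (hξ.1 i).1)
  have hldimf : ldimf G = sInf Sset := rfl
  constructor
  · -- lower bound
    rw [hldimf]
    apply le_csInf ⟨2, hmem2⟩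
    rintro s ⟨ξ, hξ, rfl⟩
    -- the p cycle edges
    have hadj_cyc : ∀ i : Fin p, G.Adj i (i + 1) := by
      rintro ⟨n, hn⟩
      by_cases h : n + 1 < p
      · rw [fin_add_one p n (by omega) hn h, hG]
        refine (toep_adj_iff p _ _).mpr ⟨by simp only [Fin.val_mk]; omega, ?_⟩
        simp only [Fin.val_mk]
        omega
      · have hn' : n = p - 1 := by omega
        subst hn'
        rw [fin_add_one_top p (by omega), hG]
        refine (toep_adj_iff p _ _).mpr ⟨by simp only [Fin.val_mk]; omega, ?_⟩
        simp only [Fin.val_mk]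
        omega
    have hone : ∀ i : Fin p,
        1 ≤ ∑ w ∈ Finset.univ.filter (fun w => G.dist w i ≠ G.dist w (i+1)), ξ w :=
      fun i => hξ.2 i (i+1) (hadj_cyc i)
    have hbig : (p:ℝ) ≤ ∑ i : Fin p,
        ∑ w ∈ Finset.univ.filter (fun w => G.dist w i ≠ G.dist w (i+1)), ξ w := by
      have h := Finset.sum_le_sum (fun i (_ : i ∈ Finset.univ) => hone i)
      simpa [Finset.card_univ] using h
    have hswap : (∑ i : Fin p,
        ∑ w ∈ Finset.univ.filter (fun w => G.dist w i ≠ G.dist w (i+1)), ξ w)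
        = ∑ w : Fin p,
          ((Finset.univ.filter (fun i : Fin p => G.dist w i ≠ G.dist w (i+1))).card : ℝ)
            * ξ w := by
      simp_rw [Finset.sum_filter]
      rw [Finset.sum_comm]
      refine Finset.sum_congr rfl (fun w _ => ?_)
      have h : ∀ i : Fin p, (if G.dist w i ≠ G.dist w (i+1) then ξ w else 0)
          = (if G.dist w i ≠ G.dist w (i+1) then (1:ℝ) else 0) * ξ w := by
        intro i
        split <;> simp
      simp_rw [h]
      rw [← Finset.sum_mul, Finset.sum_boole]
    have hcard : ∀ w : Fin p,
        ((Finset.univ.filter (fun i : Fin p => G.dist w i ≠ G.dist w (i+1))).card) ≤ p - 2 := by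
      intro w
      obtain ⟨i1, i2, h12, he1, he2⟩ := ties p hp w
      have hsubs : Finset.univ.filter (fun i : Fin p => G.dist w i ≠ G.dist w (i+1)) ⊆
          (Finset.univ.erase i1).erase i2 := by
        intro i hi
        rw [Finset.mem_filter] at hi
        rw [Finset.mem_erase, Finset.mem_erase]
        refine ⟨?_, ?_, Finset.mem_univ i⟩
        · rintro rfl
          exact hi.2 he2
        · rintro rfl
          exact hi.2 he1
      have hcc := Finset.card_le_card hsubs
      rw [Finset.card_erase_of_mem (Finset.mem_erase.mpr ⟨h12.symm, Finset.mem_univ _⟩),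
        Finset.card_erase_of_mem (Finset.mem_univ _), Finset.card_univ, Fintype.card_fin]
        at hcc
      omega
    have hstep2 : ∑ w : Fin p,
        ((Finset.univ.filter (fun i : Fin p => G.dist w i ≠ G.dist w (i+1))).card : ℝ) * ξ w
        ≤ ∑ w : Fin p, ((p:ℝ) - 2) * ξ w := by
      refine Finset.sum_le_sum (fun w _ => ?_)
      refine mul_le_mul_of_nonneg_right ?_ ((hξ.1 w).1)
      have h := hcard w
      have h2 : ((Finset.univ.filter
          (fun i : Fin p => G.dist w i ≠ G.dist w (i+1))).card : ℝ) ≤ ((p - 2 : ℕ) : ℝ) := by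
        exact_mod_cast h
      have h3 : ((p - 2 : ℕ) : ℝ) = (p:ℝ) - 2 := by
        have : (2:ℕ) ≤ p := by omega
        push_cast [this]
        ring
      linarith
    have hmulsum : ∑ w : Fin p, ((p:ℝ) - 2) * ξ w = ((p:ℝ) - 2) * ∑ w, ξ w := by
      rw [Finset.mul_sum]
    have hfin : (p:ℝ) ≤ ((p:ℝ) - 2) * ∑ w, ξ w := by
      calc (p:ℝ) ≤ _ := hbig
        _ = _ := hswap
        _ ≤ _ := hstep2
        _ = _ := hmulsum
    have hp2 : (0:ℝ) < (p:ℝ) - 2 := by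
      have : (8:ℝ) ≤ (p:ℝ) := by exact_mod_cast hp
      linarith
    rw [div_le_iff₀ hp2]
    linarith
  · -- upper bound
    rw [hldimf]
    exact csInf_le hbdd hmem2
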